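/- Let 𝔤 and 𝔥 be finite-dimensional nilpotent real Lie algebras, each of dimension 5 or 7. Then the product Lie algebra 𝔤 × 𝔥 admits a symplectic structure if and only if both 𝔤 × 𝔤 and 𝔥 × 𝔥 admit symplectic structures. -/

import Mathlib

/-- The componentwise Lie ring structure on the product of two Lie rings. -/
instance prodLieRing (L M : Type*) [LieRing L] [LieRing M] : LieRing (L × M) where
  bracket x y := (⁅x.1, y.1⁆, ⁅x.2, y.2⁆)
  add_lie x y z := by
    show (⁅x.1 + y.1, z.1⁆, ⁅x.2 + y.2, z.2⁆) = _
    simp [add_lie, Prod.ext_iff]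
  lie_add x y z := by
    show (⁅x.1, y.1 + z.1⁆, ⁅x.2, y.2 + z.2⁆) = _
    simp [lie_add, Prod.ext_iff]
  lie_self x := by
    show (⁅x.1, x.1⁆, ⁅x.2, x.2⁆) = (0, 0)
    simp
  leibniz_lie x y z := by
    show (⁅x.1, ⁅y.1, z.1⁆⁆, ⁅x.2, ⁅y.2, z.2⁆⁆) = _
    simp only [Prod.ext_iff]
    constructor <;> exact leibniz_lie _ _ _

/-- The componentwise Lie algebra structure on the product of two Lie algebras. -/
instance prodLieAlgebra (R L M : Type*) [CommRing R] [LieRing L] [LieRing M]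
    [LieAlgebra R L] [LieAlgebra R M] : LieAlgebra R (L × M) :=
  { (inferInstance : Module R (L × M)) with
    lie_smul := fun t x y => by
      show (⁅x.1, (t • y).1⁆, ⁅x.2, (t • y).2⁆) = t • (⁅x.1, y.1⁆, ⁅x.2, y.2⁆)
      simp [Prod.smul_def, Prod.ext_iff] }

/-- A 2-cocycle on a real Lie algebra `L`: an alternating (hence skew-symmetric) bilinear
form `ω` such that `ω ⁅x,y⁆ z + ω ⁅y,z⁆ x + ω ⁅z,x⁆ y = 0` for all `x y z`. -/
def IsCocycle {L : Type*} [LieRing L] [LieAlgebra ℝ L]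
    (ω : L →ₗ[ℝ] L →ₗ[ℝ] ℝ) : Prop :=
  (∀ x, ω x x = 0) ∧ ∀ x y z, ω ⁅x, y⁆ z + ω ⁅y, z⁆ x + ω ⁅z, x⁆ y = 0

/-- A symplectic structure on a real Lie algebra: a nondegenerate 2-cocycle. -/
def IsSymplecticForm {L : Type*} [LieRing L] [LieAlgebra ℝ L]
    (ω : L →ₗ[ℝ] L →ₗ[ℝ] ℝ) : Prop :=
  IsCocycle ω ∧ ∀ x, (∀ y, ω x y = 0) → x = 0

open Module LinearMap Matrix

section LinAlg


-- skew symmetry from alternating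
lemma alt_skew {V : Type*} [AddCommGroup V] [Module ℝ V] (ω : V →ₗ[ℝ] V →ₗ[ℝ] ℝ)
    (h : ∀ x, ω x x = 0) (x y : V) : ω x y = - ω y x := by
  have := h (x + y)
  simp only [map_add, LinearMap.add_apply, h] at this
  linarith

-- complement containing a given disjoint subspace
lemma exists_compl_le {V : Type*} [AddCommGroup V] [Module ℝ V]
    (K D : Submodule ℝ V) (h : K ⊓ D = ⊥) : ∃ S, IsCompl K S ∧ D ≤ S := by
  obtain ⟨C, hC⟩ := Submodule.exists_isCompl (K ⊔ D)
  refine ⟨D ⊔ C, ⟨?_, ?_⟩, le_sup_left⟩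
  · rw [Submodule.disjoint_def]
    intro x hxK hxS
    obtain ⟨d, hd, c, hc, rfl⟩ := Submodule.mem_sup.mp hxS
    have hcKD : c ∈ K ⊔ D := by
      have : c = (d + c) - d := by abel
      rw [this]
      exact Submodule.sub_mem _ (le_sup_left (α := Submodule ℝ V) hxK) (le_sup_right (α := Submodule ℝ V) hd)
    have : c = 0 := by
      have := hC.disjoint.le_bot ⟨hcKD, hc⟩
      simpa using this
    subst this
    have : d + 0 ∈ K ⊓ D := ⟨by simpa using hxK, by simpa using hd⟩
    rw [h] at this
    simpa using this
  · rw [codisjoint_iff, ← sup_assoc, codisjoint_iff.mp hC.codisjoint]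

-- a nondegenerate alternating form forces even dimension
lemma alt_nondeg_even_finrank {S : Type*} [AddCommGroup S] [Module ℝ S] [FiniteDimensional ℝ S]
    (ω : S →ₗ[ℝ] S →ₗ[ℝ] ℝ) (halt : ∀ x, ω x x = 0)
    (hnd : ∀ x, (∀ y, ω x y = 0) → x = 0) : Even (finrank ℝ S) := by
  by_contra hodd
  rw [Nat.not_even_iff_odd] at hodd
  set n := finrank ℝ S with hn
  let b : Basis (Fin n) ℝ S := Module.finBasis ℝ S
  have hndB : (LinearMap.BilinForm.toMatrix b ω).det ≠ 0 := by
    apply Matrix.Nondegenerate.det_ne_zero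
    exact (BilinForm.nondegenerate_toMatrix_iff b).mpr
      ⟨hnd, fun y hy => hnd y (fun x => by rw [alt_skew ω halt y x, hy x, neg_zero])⟩
  set M := LinearMap.BilinForm.toMatrix b ω with hM
  have hskew : Mᵀ = -M := by
    ext i j
    have := alt_skew ω halt (b j) (b i)
    simpa [M, LinearMap.BilinForm.toMatrix_apply, Matrix.transpose_apply] using this
  have : M.det = - M.det := by
    conv_lhs => rw [← Matrix.det_transpose, hskew]
    rw [Matrix.det_neg]
    simp [hodd.neg_one_pow]
  exact hndB (by linarith)

-- the kernel of an alternating form has the same dimension parity as the space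
lemma alt_ker_parity {V : Type*} [AddCommGroup V] [Module ℝ V] [FiniteDimensional ℝ V]
    (ω : V →ₗ[ℝ] V →ₗ[ℝ] ℝ) (halt : ∀ x, ω x x = 0) :
    ∃ m, finrank ℝ V = finrank ℝ (LinearMap.ker ω) + 2 * m := by
  set K := LinearMap.ker ω with hK
  obtain ⟨S, hS⟩ := Submodule.exists_isCompl K
  have hdim : finrank ℝ K + finrank ℝ S = finrank ℝ V :=
    Submodule.finrank_add_eq_of_isCompl hS
  have heven : Even (finrank ℝ S) := by
    refine alt_nondeg_even_finrank (ω.compl₁₂ S.subtype S.subtype)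
      (fun x => halt x) ?_
    intro x hx
    have hx' : ∀ y : V, ω (x : V) y = 0 := by
      intro y
      obtain ⟨k, hk, s, hs, rfl⟩ := Submodule.mem_sup.mp
        (by rw [codisjoint_iff.mp hS.codisjoint]; trivial : (y : V) ∈ K ⊔ S)
      have h1 : ω (x : V) k = 0 := by
        rw [alt_skew ω halt]
        have : ω k = 0 := hk
        simp [this]
      have h2 : ω (x : V) s = 0 := hx ⟨s, hs⟩
      simp [map_add, h1, h2]
    have : (x : V) ∈ K ⊓ S := ⟨by exact LinearMap.ext fun y => hx' y, x.2⟩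
    rw [hS.disjoint.eq_bot] at this
    exact Subtype.ext (by simpa using this)
  obtain ⟨m, hm⟩ := heven
  exact ⟨m, by omega⟩

-- existence of a nondegenerate alternating form on any even-dimensional space
lemma exists_nondeg_alt {U : Type*} [AddCommGroup U] [Module ℝ U] [FiniteDimensional ℝ U]
    (h : Even (finrank ℝ U)) :
    ∃ Θ : U →ₗ[ℝ] U →ₗ[ℝ] ℝ, (∀ x, Θ x x = 0) ∧ ∀ x, (∀ y, Θ x y = 0) → x = 0 := by
  obtain ⟨m, hm⟩ := h
  have e : U ≃ₗ[ℝ] (Fin m → ℝ) × (Fin m → ℝ) := by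
    apply LinearEquiv.ofFinrankEq
    simp [hm]
  let Θ₀ : ((Fin m → ℝ) × (Fin m → ℝ)) →ₗ[ℝ] ((Fin m → ℝ) × (Fin m → ℝ)) →ₗ[ℝ] ℝ :=
    LinearMap.mk₂ ℝ (fun x y => x.1 ⬝ᵥ y.2 - x.2 ⬝ᵥ y.1)
      (by intro a b c; simp [add_dotProduct, dotProduct_add]; ring)
      (by intro c a b; simp [smul_dotProduct, dotProduct_smul,
            smul_eq_mul]; ring)
      (by intro a b c; simp [add_dotProduct, dotProduct_add]; ring)
      (by intro c a b; simp [smul_dotProduct, dotProduct_smul,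
            smul_eq_mul]; ring)
  refine ⟨Θ₀.compl₁₂ e.toLinearMap e.toLinearMap, ?_, ?_⟩
  · intro x
    simp [Θ₀, LinearMap.compl₁₂_apply, dotProduct_comm]
  · intro x hx
    have h1 : (e x).1 = 0 := by
      have := hx (e.symm ((0 : Fin m → ℝ), (e x).1))
      simpa [Θ₀, LinearMap.compl₁₂_apply, dotProduct_self_eq_zero] using this
    have h2 : (e x).2 = 0 := by
      have := hx (e.symm ((e x).2, (0 : Fin m → ℝ)))
      simpa [Θ₀, LinearMap.compl₁₂_apply, dotProduct_self_eq_zero] using this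
    have : e x = 0 := Prod.ext h1 h2
    simpa using congrArg e.symm this


end LinAlg

section Aux

/-- Span of all brackets. -/
def bracketSpan (L : Type*) [LieRing L] [LieAlgebra ℝ L] : Submodule ℝ L :=
  Submodule.span ℝ {z : L | ∃ a b : L, ⁅a, b⁆ = z}

/-- A cocycle whose radical meets the span of brackets trivially. -/
def HasGood (L : Type*) [LieRing L] [LieAlgebra ℝ L] : Prop :=
  ∃ ω : L →ₗ[ℝ] L →ₗ[ℝ] ℝ, IsCocycle ω ∧
    ∀ x, (∀ y, ω x y = 0) → x ∈ bracketSpan L → x = 0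

variable {L M : Type*} [LieRing L] [LieAlgebra ℝ L] [LieRing M] [LieAlgebra ℝ M]

lemma prod_bracket (x y : L × M) : ⁅x, y⁆ = (⁅x.1, y.1⁆, ⁅x.2, y.2⁆) := rfl

lemma extract_left (Ω : (L × M) →ₗ[ℝ] (L × M) →ₗ[ℝ] ℝ) (hΩ : IsSymplecticForm Ω) :
    HasGood L := by
  obtain ⟨⟨halt, hcoc⟩, hnd⟩ := hΩ
  refine ⟨Ω.compl₁₂ (LinearMap.inl ℝ L M) (LinearMap.inl ℝ L M), ⟨?_, ?_⟩, ?_⟩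
  · intro x; exact halt _
  · intro x y z
    have hb : ∀ a b : L, ((⁅a, b⁆ : L), (0 : M)) = ⁅((a, 0) : L × M), (b, 0)⁆ := by
      intro a b
      rw [prod_bracket]
      simp
    simp only [LinearMap.compl₁₂_apply, LinearMap.inl_apply, hb]
    exact hcoc _ _ _
  · intro x hx hxD
    have hcross : ∀ y2 : M, Ω (x, 0) (0, y2) = 0 := by
      intro y2
      set φ : L →ₗ[ℝ] ℝ := (Ω.flip (0, y2)).comp (LinearMap.inl ℝ L M) with hφ
      have hφap : ∀ a : L, φ a = Ω (a, 0) (0, y2) := by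
        intro a; simp [φ, LinearMap.flip_apply]
      have hker : bracketSpan L ≤ LinearMap.ker φ := by
        rw [bracketSpan, Submodule.span_le]
        rintro _ ⟨a, b, rfl⟩
        have h1 : (⁅((b, 0) : L × M), (0, y2)⁆ : L × M) = 0 := by
          rw [prod_bracket]; simp
        have h2 : (⁅((0, y2) : L × M), (a, 0)⁆ : L × M) = 0 := by
          rw [prod_bracket]; simp
        have := hcoc ((a, 0) : L × M) (b, 0) (0, y2)
        rw [h1, h2] at this
        simp only [map_zero, LinearMap.zero_apply, add_zero] at this
        have hb : ((⁅a, b⁆ : L), (0 : M)) = ⁅((a, 0) : L × M), (b, 0)⁆ := by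
          rw [prod_bracket]; simp
        simp only [SetLike.mem_coe, LinearMap.mem_ker]
        rw [hφap, hb, this]
      have := hker hxD
      rw [LinearMap.mem_ker] at this
      rw [← hφap, this]
    have : ((x, 0) : L × M) = 0 := by
      apply hnd
      rintro ⟨y1, y2⟩
      have : ((y1, y2) : L × M) = (y1, 0) + (0, y2) := by simp
      rw [this, map_add]
      have h1 : Ω (x, 0) (y1, 0) = 0 := hx y1
      rw [h1, hcross y2, add_zero]
    simpa [Prod.ext_iff] using this

lemma extract_right (Ω : (L × M) →ₗ[ℝ] (L × M) →ₗ[ℝ] ℝ) (hΩ : IsSymplecticForm Ω) :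
    HasGood M := by
  obtain ⟨⟨halt, hcoc⟩, hnd⟩ := hΩ
  refine ⟨Ω.compl₁₂ (LinearMap.inr ℝ L M) (LinearMap.inr ℝ L M), ⟨?_, ?_⟩, ?_⟩
  · intro x; exact halt _
  · intro x y z
    have hb : ∀ a b : M, ((0 : L), (⁅a, b⁆ : M)) = ⁅((0, a) : L × M), (0, b)⁆ := by
      intro a b
      rw [prod_bracket]
      simp
    simp only [LinearMap.compl₁₂_apply, LinearMap.inr_apply, hb]
    exact hcoc _ _ _
  · intro x hx hxD
    have hcross : ∀ y1 : L, Ω (0, x) (y1, 0) = 0 := by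
      intro y1
      set φ : M →ₗ[ℝ] ℝ := (Ω.flip (y1, 0)).comp (LinearMap.inr ℝ L M) with hφ
      have hφap : ∀ a : M, φ a = Ω (0, a) (y1, 0) := by
        intro a; simp [φ, LinearMap.flip_apply]
      have hker : bracketSpan M ≤ LinearMap.ker φ := by
        rw [bracketSpan, Submodule.span_le]
        rintro _ ⟨a, b, rfl⟩
        have h1 : (⁅((0, b) : L × M), (y1, 0)⁆ : L × M) = 0 := by
          rw [prod_bracket]; simp
        have h2 : (⁅((y1, 0) : L × M), (0, a)⁆ : L × M) = 0 := by
          rw [prod_bracket]; simp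
        have := hcoc ((0, a) : L × M) (0, b) (y1, 0)
        rw [h1, h2] at this
        simp only [map_zero, LinearMap.zero_apply, add_zero] at this
        have hb : ((0 : L), (⁅a, b⁆ : M)) = ⁅((0, a) : L × M), (0, b)⁆ := by
          rw [prod_bracket]; simp
        simp only [SetLike.mem_coe, LinearMap.mem_ker]
        rw [hφap, hb, this]
      have := hker hxD
      rw [LinearMap.mem_ker] at this
      rw [← hφap, this]
    have : ((0, x) : L × M) = 0 := by
      apply hnd
      rintro ⟨y1, y2⟩
      have : ((y1, y2) : L × M) = (y1, 0) + (0, y2) := by simp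
      rw [this, map_add]
      have h2 : Ω (0, x) (0, y2) = 0 := hx y2
      rw [h2, hcross y1, add_zero]
    simpa [Prod.ext_iff] using this

end Aux

section Construct

open Matrix in
lemma construct {L M : Type*} [LieRing L] [LieAlgebra ℝ L] [FiniteDimensional ℝ L]
    [LieRing M] [LieAlgebra ℝ M] [FiniteDimensional ℝ M]
    (hL : HasGood L) (hM : HasGood M)
    (hpar : Even (finrank ℝ L + finrank ℝ M)) :
    ∃ Ω : (L × M) →ₗ[ℝ] (L × M) →ₗ[ℝ] ℝ, IsSymplecticForm Ω := by
  obtain ⟨ωV, ⟨altV, cocV⟩, ndV⟩ := hL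
  obtain ⟨ωW, ⟨altW, cocW⟩, ndW⟩ := hM
  set KV := LinearMap.ker ωV with hKV
  set KW := LinearMap.ker ωW with hKW
  have hdisjV : KV ⊓ bracketSpan L = ⊥ := by
    rw [eq_bot_iff]
    rintro x ⟨hx1, hx2⟩
    have : x = 0 := ndV x (fun y => by
      have : ωV x = 0 := hx1
      rw [this]; rfl) hx2
    simp [this]
  have hdisjW : KW ⊓ bracketSpan M = ⊥ := by
    rw [eq_bot_iff]
    rintro x ⟨hx1, hx2⟩
    have : x = 0 := ndW x (fun y => by
      have : ωW x = 0 := hx1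
      rw [this]; rfl) hx2
    simp [this]
  obtain ⟨SV, hSV, hDSV⟩ := exists_compl_le KV (bracketSpan L) hdisjV
  obtain ⟨SW, hSW, hDSW⟩ := exists_compl_le KW (bracketSpan M) hdisjW
  set π1 := Submodule.projectionOnto KV SV hSV with hπ1
  set π2 := Submodule.projectionOnto KW SW hSW with hπ2
  -- parity
  obtain ⟨mV, hmV⟩ := alt_ker_parity ωV altV
  obtain ⟨mW, hmW⟩ := alt_ker_parity ωW altW
  have hUeven : Even (finrank ℝ (KV × KW)) := by
    rw [Module.finrank_prod]
    rw [← hKV] at hmV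
    rw [← hKW] at hmW
    obtain ⟨r, hr⟩ := hpar
    exact ⟨r - mV - mW, by omega⟩
  obtain ⟨Θ, altΘ, ndΘ⟩ := exists_nondeg_alt hUeven
  set j : (L × M) →ₗ[ℝ] (KV × KW) := LinearMap.prodMap π1 π2 with hj
  set Ω : (L × M) →ₗ[ℝ] (L × M) →ₗ[ℝ] ℝ :=
    ωV.compl₁₂ (LinearMap.fst ℝ L M) (LinearMap.fst ℝ L M)
      + ωW.compl₁₂ (LinearMap.snd ℝ L M) (LinearMap.snd ℝ L M)
      + Θ.compl₁₂ j j with hΩdef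
  have hΩ : ∀ x y : L × M,
      Ω x y = ωV x.1 y.1 + ωW x.2 y.2 + Θ (π1 x.1, π2 x.2) (π1 y.1, π2 y.2) := by
    intro x y
    simp [Ω, j, LinearMap.compl₁₂_apply, LinearMap.prodMap_apply]
  have hbrV : ∀ a b : L, π1 ⁅a, b⁆ = 0 :=
    fun a b => Submodule.projectionOnto_apply_of_mem_right hSV
      (hDSV (Submodule.subset_span ⟨a, b, rfl⟩))
  have hbrW : ∀ a b : M, π2 ⁅a, b⁆ = 0 :=
    fun a b => Submodule.projectionOnto_apply_of_mem_right hSW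
      (hDSW (Submodule.subset_span ⟨a, b, rfl⟩))
  refine ⟨Ω, ⟨?_, ?_⟩, ?_⟩
  · intro x
    rw [hΩ, altV, altW, altΘ]
    ring
  · intro x y z
    rw [prod_bracket, prod_bracket, prod_bracket, hΩ, hΩ, hΩ]
    simp only [hbrV, hbrW]
    have hz : ((0 : KV), (0 : KW)) = (0 : KV × KW) := rfl
    rw [hz]
    simp only [map_zero, LinearMap.zero_apply]
    have := cocV x.1 y.1 z.1
    have := cocW x.2 y.2 z.2
    linarith
  · intro x hx
    have hKVr : ∀ r : KV, ωV x.1 (r : L) = 0 := by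
      intro r
      rw [alt_skew ωV altV]
      have : ωV (r : L) = 0 := r.2
      rw [this]
      simp
    have hKWr : ∀ r : KW, ωW x.2 (r : M) = 0 := by
      intro r
      rw [alt_skew ωW altW]
      have : ωW (r : M) = 0 := r.2
      rw [this]
      simp
    have hθ : ∀ u : KV × KW, Θ (π1 x.1, π2 x.2) u = 0 := by
      intro u
      have h1 : Θ (π1 x.1, π2 x.2) (u.1, 0) = 0 := by
        have := hx ((u.1 : L), 0)
        rw [hΩ] at this
        simpa [hπ1, hπ2, Submodule.projectionOnto_apply_left, hKVr u.1] using this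
      have h2 : Θ (π1 x.1, π2 x.2) (0, u.2) = 0 := by
        have := hx (0, (u.2 : M))
        rw [hΩ] at this
        simpa [hπ1, hπ2, Submodule.projectionOnto_apply_left, hKWr u.2] using this
      have : u = (u.1, (0 : KW)) + ((0 : KV), u.2) := by
        simp
      rw [this, map_add, h1, h2, add_zero]
    have hπx : ((π1 x.1, π2 x.2) : KV × KW) = 0 := ndΘ _ hθ
    have hπx1 : π1 x.1 = 0 := congrArg Prod.fst hπx
    have hπx2 : π2 x.2 = 0 := congrArg Prod.snd hπx
    have hx1 : x.1 = 0 := by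
      have hxK : x.1 ∈ KV := by
        rw [hKV, LinearMap.mem_ker]
        ext y1
        have := hx (y1, 0)
        rw [hΩ] at this
        rw [hπx1, hπx2] at this
        have hz : ((0 : KV), (0 : KW)) = (0 : KV × KW) := rfl
        rw [hz] at this
        simpa using this
      have hxS : x.1 ∈ SV := by
        rw [← Submodule.ker_projectionOnto hSV]
        exact LinearMap.mem_ker.mpr hπx1
      have := hSV.disjoint.le_bot ⟨hxK, hxS⟩
      simpa using this
    have hx2 : x.2 = 0 := by
      have hxK : x.2 ∈ KW := by
        rw [hKW, LinearMap.mem_ker]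
        ext y2
        have := hx (0, y2)
        rw [hΩ] at this
        rw [hπx1, hπx2] at this
        have hz : ((0 : KV), (0 : KW)) = (0 : KV × KW) := rfl
        rw [hz] at this
        simpa using this
      have hxS : x.2 ∈ SW := by
        rw [← Submodule.ker_projectionOnto hSW]
        exact LinearMap.mem_ker.mpr hπx2
      have := hSW.disjoint.le_bot ⟨hxK, hxS⟩
      simpa using this
    exact Prod.ext hx1 hx2

end Construct

/-- For nilpotent real Lie algebras `L`, `M`, each of dimension 5 or 7, the product `L × M`
admits a symplectic structure if and only if both `L × L` and `M × M` do. -/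
theorem nilpotent_dim5or7_prod_symplectic_iff_squares
    {L M : Type*} [LieRing L] [LieAlgebra ℝ L] [FiniteDimensional ℝ L]
    [LieRing.IsNilpotent L]
    [LieRing M] [LieAlgebra ℝ M] [FiniteDimensional ℝ M]
    [LieRing.IsNilpotent M]
    (hdimL : Module.finrank ℝ L = 5 ∨ Module.finrank ℝ L = 7)
    (hdimM : Module.finrank ℝ M = 5 ∨ Module.finrank ℝ M = 7) :
    (∃ Ω : (L × M) →ₗ[ℝ] (L × M) →ₗ[ℝ] ℝ, IsSymplecticForm Ω) ↔
      ((∃ ω : (L × L) →ₗ[ℝ] (L × L) →ₗ[ℝ] ℝ, IsSymplecticForm ω) ∧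
        ∃ ω : (M × M) →ₗ[ℝ] (M × M) →ₗ[ℝ] ℝ, IsSymplecticForm ω) := by
  have oddL : Odd (Module.finrank ℝ L) := by rcases hdimL with h | h <;> rw [h] <;> decide
  have oddM : Odd (Module.finrank ℝ M) := by rcases hdimM with h | h <;> rw [h] <;> decide
  constructor
  · rintro ⟨Ω, hΩ⟩
    have pL := extract_left Ω hΩ
    have pM := extract_right Ω hΩ
    exact ⟨construct pL pL ⟨Module.finrank ℝ L, rfl⟩,
      construct pM pM ⟨Module.finrank ℝ M, rfl⟩⟩
  · rintro ⟨⟨Ω1, h1⟩, ⟨Ω2, h2⟩⟩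
    have pL := extract_left Ω1 h1
    have pM := extract_left Ω2 h2
    exact construct pL pM (oddL.add_odd oddM)
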